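/- For every integer k ≥ 2, in the random k-tree process the expected number Y_k(n) = E[X_k(n)] of vertices of degree exactly k satisfies the recurrence Y_k(n+1) = 1 + (1 − k/(k·n − k² + 1))·Y_k(n) for all n ≥ k+2, together with the initial value Y_k(k+2) = 2. -/

import Mathlib

open MeasureTheory

/-- The complete graph on the vertices `0, …, m-1` inside `ℕ`. -/
def completeBelow (m : ℕ) : SimpleGraph ℕ :=
  SimpleGraph.fromRel (fun u v => u < m ∧ v < m)

/-- The graph obtained from `g` by joining the new vertex `n` to all vertices of `C`. -/
def extendGraph (g : SimpleGraph ℕ) (n : ℕ) (C : Finset ℕ) : SimpleGraph ℕ :=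
  SimpleGraph.fromRel (fun u v => g.Adj u v ∨ (u = n ∧ v ∈ C))

/-- The random `k`-tree process: `G (k+1)` is almost surely the complete graph on the
vertices `0, …, k` (representing `v₁, …, v_{k+1}`), and given `G n = g` (for `n ≥ k+1`),
a `k`-clique of `g` is chosen uniformly at random among all `k`-cliques of `g` and the
new vertex `n` (representing `v_{n+1}`) is joined to all of its `k` vertices. -/
structure IsRandomKTreeProcess (k : ℕ) {Ω : Type*} [MeasurableSpace Ω]
    (μ : Measure Ω) (G : ℕ → Ω → SimpleGraph ℕ) : Prop where
  meas : ∀ n (g : SimpleGraph ℕ), MeasurableSet {ω | G n ω = g}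
  init : μ {ω | G (k + 1) ω = completeBelow (k + 1)} = 1
  step : ∀ n, k + 1 ≤ n → ∀ g : SimpleGraph ℕ, ∀ C : Finset ℕ, g.IsNClique k C →
    μ {ω | G n ω = g ∧ G (n + 1) ω = extendGraph g n C}
      = μ {ω | G n ω = g} / ({D : Finset ℕ | g.IsNClique k D}.ncard : ENNReal)

/-- `degCount g n d` is the number of vertices of degree `d` in the graph `g` whose
vertex set is `{0, …, n-1}`. -/
noncomputable def degCount (g : SimpleGraph ℕ) (n d : ℕ) : ℕ :=
  {v : ℕ | v < n ∧ (g.neighborSet v).ncard = d}.ncard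

open Finset
lemma completeBelow_adj (m u v : ℕ) :
    (completeBelow m).Adj u v ↔ u ≠ v ∧ u < m ∧ v < m := by
  simp only [completeBelow, SimpleGraph.fromRel_adj]; tauto

lemma extendGraph_adj (g : SimpleGraph ℕ) (n : ℕ) (C : Finset ℕ) (u v : ℕ) :
    (extendGraph g n C).Adj u v ↔
      u ≠ v ∧ (g.Adj u v ∨ (u = n ∧ v ∈ C) ∨ (v = n ∧ u ∈ C)) := by
  have h := g.adj_comm u v
  simp only [extendGraph, SimpleGraph.fromRel_adj]
  tauto

open Classical in
noncomputable def cliquesF (k : ℕ) (g : SimpleGraph ℕ) (n : ℕ) : Finset (Finset ℕ) :=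
  ((Finset.range n).powersetCard k).filter (fun C => g.IsNClique k C)

lemma mem_cliquesF {k n : ℕ} {g : SimpleGraph ℕ} {C : Finset ℕ} :
    C ∈ cliquesF k g n ↔ C ⊆ Finset.range n ∧ g.IsNClique k C := by
  classical
  simp only [cliquesF, Finset.mem_filter, Finset.mem_powersetCard]
  constructor
  · rintro ⟨⟨h1, _⟩, h3⟩; exact ⟨h1, h3⟩
  · rintro ⟨h1, h3⟩; exact ⟨⟨h1, h3.card_eq⟩, h3⟩

lemma clique_mem_lt {k n : ℕ} (hk : 2 ≤ k) {g : SimpleGraph ℕ}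
    (hbnd : ∀ u v, g.Adj u v → u < n ∧ v < n) {C : Finset ℕ}
    (hC : g.IsNClique k C) : ∀ x ∈ C, x < n := by
  intro x hx
  have h2 : 1 < C.card := by rw [hC.card_eq]; omega
  obtain ⟨y, hy, hyx⟩ := Finset.exists_mem_ne h2 x
  have hadj : g.Adj y x := hC.isClique (Finset.mem_coe.mpr hy) (Finset.mem_coe.mpr hx) hyx
  exact (hbnd y x hadj).2

section Ext

variable {k n : ℕ} {g : SimpleGraph ℕ} {C : Finset ℕ}
variable (hk : 2 ≤ k) (hbnd : ∀ u v, g.Adj u v → u < n ∧ v < n) (hC : g.IsNClique k C)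

include hk hbnd hC in
lemma memC_lt : ∀ x ∈ C, x < n := clique_mem_lt hk hbnd hC

include hk hbnd hC in
lemma n_not_mem_C : n ∉ C := fun h => lt_irrefl n (memC_lt hk hbnd hC n h)

include hbnd in
lemma not_adj_n_left : ∀ v, ¬ g.Adj n v := fun v h => lt_irrefl n (hbnd n v h).1

include hbnd in
lemma not_adj_n_right : ∀ v, ¬ g.Adj v n := fun v h => lt_irrefl n (hbnd v n h).2

include hk hbnd hC in
lemma nbr_ext_n : (extendGraph g n C).neighborSet n = ↑C := by
  ext u
  simp only [SimpleGraph.mem_neighborSet, extendGraph_adj, Finset.mem_coe]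
  constructor
  · rintro ⟨hne, h | ⟨_, hu⟩ | ⟨hu, _⟩⟩
    · exact absurd h (not_adj_n_left hbnd u)
    · exact hu
    · exact absurd hu.symm hne
  · intro hu
    have h1 : u ≠ n := fun e => n_not_mem_C hk hbnd hC (e ▸ hu)
    tauto

include hk hbnd hC in
lemma nbr_ext_mem {v : ℕ} (hv : v ∈ C) :
    (extendGraph g n C).neighborSet v = insert n (g.neighborSet v) := by
  have hvn : v ≠ n := fun e => n_not_mem_C hk hbnd hC (e ▸ hv)
  ext u
  simp only [SimpleGraph.mem_neighborSet, extendGraph_adj, Set.mem_insert_iff]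
  constructor
  · rintro ⟨hne, h | ⟨hvn', _⟩ | ⟨hu, _⟩⟩
    · exact Or.inr h
    · exact absurd hvn' hvn
    · exact Or.inl hu
  · rintro (rfl | h)
    · exact ⟨hvn, Or.inr (Or.inr ⟨rfl, hv⟩)⟩
    · exact ⟨h.ne, Or.inl h⟩

include hbnd in
lemma nbr_ext_other {v : ℕ} (hvn : v ≠ n) (hvC : v ∉ C) :
    (extendGraph g n C).neighborSet v = g.neighborSet v := by
  ext u
  simp only [SimpleGraph.mem_neighborSet, extendGraph_adj]
  constructor
  · rintro ⟨hne, h | ⟨hv', _⟩ | ⟨rfl, hv'⟩⟩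
    · exact h
    · exact absurd hv' hvn
    · exact absurd hv' hvC
  · intro h; exact ⟨h.ne, Or.inl h⟩

include hbnd in
lemma nbr_finite (v : ℕ) : (g.neighborSet v).Finite := by
  apply Set.Finite.subset (Set.finite_Iio n)
  intro u hu
  exact (hbnd v u hu).2

lemma le_ext : g ≤ extendGraph g n C := by
  intro u v h
  exact (extendGraph_adj g n C u v).mpr ⟨h.ne, Or.inl h⟩

include hk hbnd hC in
lemma isNClique_ext_iff (D : Finset ℕ) :
    (extendGraph g n C).IsNClique k D ↔
      g.IsNClique k D ∨ ∃ S ∈ C.powersetCard (k - 1), D = insert n S := by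
  constructor
  · intro hD
    by_cases hn : n ∈ D
    · right
      refine ⟨D.erase n, ?_, (Finset.insert_erase hn).symm⟩
      rw [Finset.mem_powersetCard]
      constructor
      · intro x hx
        have hxn : x ≠ n := (Finset.mem_erase.mp hx).1
        have hxD : x ∈ D := (Finset.mem_erase.mp hx).2
        have hadj := hD.isClique (Finset.mem_coe.mpr hn) (Finset.mem_coe.mpr hxD) (Ne.symm hxn)
        rcases (extendGraph_adj g n C n x).mp hadj with ⟨_, h | ⟨_, hxC⟩ | ⟨hxn', _⟩⟩
        · exact absurd h (not_adj_n_left hbnd x)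
        · exact hxC
        · exact absurd hxn' hxn
      · rw [Finset.card_erase_of_mem hn, hD.card_eq]
    · left
      refine ⟨?_, hD.card_eq⟩
      intro x hx y hy hxy
      have hadj := hD.isClique hx hy hxy
      rcases (extendGraph_adj g n C x y).mp hadj with ⟨_, h | ⟨hxn, _⟩ | ⟨hyn, _⟩⟩
      · exact h
      · exact absurd (hxn ▸ hx) hn
      · exact absurd (hyn ▸ hy) hn
  · rintro (hD | ⟨S, hS, rfl⟩)
    · exact hD.mono le_ext
    · rw [Finset.mem_powersetCard] at hS
      obtain ⟨hSC, hScard⟩ := hS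
      have hnS : n ∉ S := fun h => n_not_mem_C hk hbnd hC (hSC h)
      constructor
      · intro x hx y hy hxy
        simp only [Finset.coe_insert, Set.mem_insert_iff, Finset.mem_coe] at hx hy
        rcases hx with hxn | hx
        · rcases hy with hyn | hy
          · exact absurd (hxn.trans hyn.symm) hxy
          · exact (extendGraph_adj g n C x y).mpr ⟨hxy, Or.inr (Or.inl ⟨hxn, hSC hy⟩)⟩
        · rcases hy with hyn | hy
          · exact (extendGraph_adj g n C x y).mpr ⟨hxy, Or.inr (Or.inr ⟨hyn, hSC hx⟩)⟩
          · exact le_ext (hC.isClique (Finset.mem_coe.mpr (hSC hx)) (Finset.mem_coe.mpr (hSC hy)) hxy)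
      · rw [Finset.card_insert_of_notMem hnS, hScard]; omega

end Ext

section Ext2

variable {k n : ℕ} {g : SimpleGraph ℕ} {C : Finset ℕ}
variable (hk : 2 ≤ k) (hbnd : ∀ u v, g.Adj u v → u < n ∧ v < n) (hC : g.IsNClique k C)

include hk hbnd hC in
lemma cliquesF_ext :
    cliquesF k (extendGraph g n C) (n + 1)
      = cliquesF k g n ∪ (C.powersetCard (k - 1)).image (insert n) := by
  ext D
  simp only [mem_cliquesF, Finset.mem_union, Finset.mem_image]
  constructor
  · rintro ⟨hsub, hD⟩
    rcases (isNClique_ext_iff hk hbnd hC D).mp hD with hold | ⟨S, hS, rfl⟩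
    · left
      refine ⟨?_, hold⟩
      intro x hx
      simp only [Finset.mem_range]
      exact clique_mem_lt hk hbnd hold x hx
    · right
      exact ⟨S, hS, rfl⟩
  · rintro (⟨hsub, hD⟩ | ⟨S, hS, rfl⟩)
    · refine ⟨hsub.trans (by intro x hx; simp only [Finset.mem_range] at *; omega), ?_⟩
      exact (isNClique_ext_iff hk hbnd hC D).mpr (Or.inl hD)
    · constructor
      · intro x hx
        rcases Finset.mem_insert.mp hx with rfl | hxS
        · simp
        · have : x ∈ C := (Finset.mem_powersetCard.mp hS).1 hxS
          simp only [Finset.mem_range]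
          have := memC_lt hk hbnd hC x this
          omega
      · exact (isNClique_ext_iff hk hbnd hC _).mpr (Or.inr ⟨S, hS, rfl⟩)

include hk hbnd hC in
lemma card_cliquesF_ext :
    (cliquesF k (extendGraph g n C) (n + 1)).card = (cliquesF k g n).card + k := by
  rw [cliquesF_ext hk hbnd hC]
  have hdisj : Disjoint (cliquesF k g n) ((C.powersetCard (k - 1)).image (insert n)) := by
    rw [Finset.disjoint_left]
    rintro D hD hD'
    obtain ⟨S, hS, rfl⟩ := Finset.mem_image.mp hD'
    have hsub := (mem_cliquesF.mp hD).1
    have : n ∈ Finset.range n := hsub (Finset.mem_insert_self n S)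
    simp at this
  rw [Finset.card_union_of_disjoint hdisj]
  congr 1
  rw [Finset.card_image_of_injOn, Finset.card_powersetCard, hC.card_eq]
  · have h1 : k - (k - 1) = 1 := by omega
    rw [← Nat.choose_symm (Nat.sub_le k 1), h1, Nat.choose_one_right]
  · intro S hS S' hS' hss
    simp only [Finset.mem_coe, Finset.mem_powersetCard] at hS hS'
    have hnS : n ∉ S := fun h => n_not_mem_C hk hbnd hC (hS.1 h)
    have hnS' : n ∉ S' := fun h => n_not_mem_C hk hbnd hC (hS'.1 h)
    rw [← Finset.erase_insert hnS, ← Finset.erase_insert hnS', hss]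

end Ext2

section Counting

variable {k n : ℕ} {g : SimpleGraph ℕ}
variable (hk : 2 ≤ k) (hbnd : ∀ u v, g.Adj u v → u < n ∧ v < n)

include hk hbnd in
lemma card_cliques_with {v : ℕ} {D : Finset ℕ} (hD : g.IsNClique k D)
    (hDeq : ↑D = g.neighborSet v) :
    ((cliquesF k g n).filter (fun C => v ∈ C)).card = k := by
  classical
  have hvD : v ∉ D := by
    intro h
    have : v ∈ g.neighborSet v := hDeq ▸ (Finset.mem_coe.mpr h)
    exact g.irrefl this
  have hadjD : ∀ x ∈ D, g.Adj v x := by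
    intro x hx
    have : x ∈ g.neighborSet v := hDeq ▸ (Finset.mem_coe.mpr hx)
    exact this
  have hvlt : v < n := by
    have hDne : D.Nonempty := by
      rw [← Finset.card_pos, hD.card_eq]; omega
    obtain ⟨x, hx⟩ := hDne
    exact (hbnd v x (hadjD x hx)).1
  have hset : (cliquesF k g n).filter (fun C => v ∈ C)
      = (D.powersetCard (k - 1)).image (insert v) := by
    ext E
    simp only [Finset.mem_filter, mem_cliquesF, Finset.mem_image, Finset.mem_powersetCard]
    constructor
    · rintro ⟨⟨hsub, hE⟩, hvE⟩
      refine ⟨E.erase v, ⟨?_, ?_⟩, Finset.insert_erase hvE⟩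
      · intro x hx
        have hxv : x ≠ v := (Finset.mem_erase.mp hx).1
        have hxE : x ∈ E := (Finset.mem_erase.mp hx).2
        have hadj : g.Adj v x := hE.isClique (Finset.mem_coe.mpr hvE) (Finset.mem_coe.mpr hxE) (Ne.symm hxv)
        have : x ∈ g.neighborSet v := hadj
        rw [← hDeq] at this
        exact Finset.mem_coe.mp this
      · rw [Finset.card_erase_of_mem hvE, hE.card_eq]
    · rintro ⟨S, ⟨hSD, hScard⟩, rfl⟩
      have hvS : v ∉ S := fun h => hvD (hSD h)
      refine ⟨⟨?_, ?_⟩, Finset.mem_insert_self _ _⟩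
      · intro x hx
        rcases Finset.mem_insert.mp hx with rfl | hxS
        · simpa using hvlt
        · simp only [Finset.mem_range]
          exact (hbnd v x (hadjD x (hSD hxS))).2
      · constructor
        · intro x hx y hy hxy
          simp only [Finset.coe_insert, Set.mem_insert_iff, Finset.mem_coe] at hx hy
          rcases hx with hxv | hx
          · rcases hy with hyv | hy
            · exact absurd (hxv.trans hyv.symm) hxy
            · exact hxv ▸ hadjD y (hSD hy)
          · rcases hy with hyv | hy
            · exact (hyv ▸ hadjD x (hSD hx)).symm
            · exact hD.isClique (Finset.mem_coe.mpr (hSD hx)) (Finset.mem_coe.mpr (hSD hy)) hxy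
        · rw [Finset.card_insert_of_notMem hvS, hScard]; omega
  rw [hset, Finset.card_image_of_injOn, Finset.card_powersetCard, hD.card_eq]
  · have h1 : k - (k - 1) = 1 := by omega
    rw [← Nat.choose_symm (Nat.sub_le k 1), h1, Nat.choose_one_right]
  · intro S hS S' hS' hss
    simp only [Finset.mem_coe, Finset.mem_powersetCard] at hS hS'
    have hvS : v ∉ S := fun h => hvD (hS.1 h)
    have hvS' : v ∉ S' := fun h => hvD (hS'.1 h)
    rw [← Finset.erase_insert hvS, ← Finset.erase_insert hvS', hss]

end Counting

lemma degCount_eq_card (g : SimpleGraph ℕ) (m d : ℕ) :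
    degCount g m d
      = ((Finset.range m).filter (fun v => (g.neighborSet v).ncard = d)).card := by
  classical
  rw [degCount, ← Set.ncard_coe_finset]
  congr 1
  ext v
  simp [Finset.mem_filter]

section DC

variable {k n : ℕ} {g : SimpleGraph ℕ}
variable (hk : 2 ≤ k) (hbnd : ∀ u v, g.Adj u v → u < n ∧ v < n)

lemma sum_filter_card
    (hcc : ∀ v, (g.neighborSet v).ncard = k →
      ((cliquesF k g n).filter (fun C => v ∈ C)).card = k) :
    ∑ C ∈ cliquesF k g n, (C.filter (fun v => (g.neighborSet v).ncard = k)).card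
      = k * degCount g n k := by
  classical
  set P : ℕ → Prop := fun v => (g.neighborSet v).ncard = k with hP
  have key : ∀ C ∈ cliquesF k g n,
      C.filter P = ((Finset.range n).filter P).filter (fun v => v ∈ C) := by
    intro C hCm
    have hsub := (mem_cliquesF.mp hCm).1
    ext x
    simp only [Finset.mem_filter, Finset.mem_range]
    constructor
    · rintro ⟨hx, hPx⟩
      exact ⟨⟨Finset.mem_range.mp (hsub hx), hPx⟩, hx⟩
    · rintro ⟨⟨_, hPx⟩, hx⟩
      exact ⟨hx, hPx⟩
  calc ∑ C ∈ cliquesF k g n, (C.filter P).card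
      = ∑ C ∈ cliquesF k g n, ∑ v ∈ (Finset.range n).filter P,
          (if v ∈ C then 1 else 0) := by
        refine Finset.sum_congr rfl ?_
        intro C hCm
        rw [key C hCm, Finset.card_filter]
    _ = ∑ v ∈ (Finset.range n).filter P, ∑ C ∈ cliquesF k g n,
          (if v ∈ C then 1 else 0) := Finset.sum_comm
    _ = ∑ v ∈ (Finset.range n).filter P,
          ((cliquesF k g n).filter (fun C => v ∈ C)).card := by
        refine Finset.sum_congr rfl ?_
        intro v _
        rw [Finset.card_filter]
    _ = ∑ v ∈ (Finset.range n).filter P, k := by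
        refine Finset.sum_congr rfl ?_
        intro v hv
        exact hcc v (Finset.mem_filter.mp hv).2
    _ = k * degCount g n k := by
        rw [Finset.sum_const, smul_eq_mul, degCount_eq_card, mul_comm]

include hk hbnd in
lemma degCount_ext_add {C : Finset ℕ} (hC : g.IsNClique k C)
    (hmin : ∀ v, v < n → k ≤ (g.neighborSet v).ncard) :
    degCount (extendGraph g n C) (n + 1) k
        + (C.filter (fun v => (g.neighborSet v).ncard = k)).card
      = degCount g n k + 1 := by
  classical
  set g' := extendGraph g n C with hg'
  have hCl : ∀ x ∈ C, x < n := memC_lt hk hbnd hC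
  have hnC : n ∉ C := n_not_mem_C hk hbnd hC
  have hfin : ∀ v, (g.neighborSet v).Finite := nbr_finite hbnd
  have hnmem : ∀ v, n ∉ g.neighborSet v := by
    intro v h
    exact lt_irrefl n (hbnd v n h).2
  -- degrees in g'
  have hdegn : (g'.neighborSet n).ncard = k := by
    rw [hg', nbr_ext_n hk hbnd hC, Set.ncard_coe_finset, hC.card_eq]
  have hdegmem : ∀ v ∈ C, (g'.neighborSet v).ncard = (g.neighborSet v).ncard + 1 := by
    intro v hv
    rw [hg', nbr_ext_mem hk hbnd hC hv, Set.ncard_insert_of_notMem (hnmem v) (hfin v)]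
  have hdegoth : ∀ v, v ≠ n → v ∉ C → (g'.neighborSet v).ncard = (g.neighborSet v).ncard := by
    intro v h1 h2
    rw [hg', nbr_ext_other hbnd h1 h2]
  set P : ℕ → Prop := fun v => (g.neighborSet v).ncard = k with hPdef
  set s : Finset ℕ := (Finset.range n).filter P with hs
  have hmain : (Finset.range (n + 1)).filter (fun v => (g'.neighborSet v).ncard = k)
      = insert n (s \ C) := by
    ext v
    simp only [Finset.mem_filter, Finset.mem_range, Finset.mem_insert, Finset.mem_sdiff, hs]
    constructor
    · rintro ⟨hvlt, hdeg⟩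
      by_cases hvn : v = n
      · exact Or.inl hvn
      · right
        have hvltn : v < n := by omega
        by_cases hvC : v ∈ C
        · exfalso
          rw [hdegmem v hvC] at hdeg
          have := hmin v hvltn
          omega
        · rw [hdegoth v hvn hvC] at hdeg
          exact ⟨⟨hvltn, hdeg⟩, hvC⟩
    · rintro (rfl | ⟨⟨hvlt, hdeg⟩, hvC⟩)
      · exact ⟨by omega, hdegn⟩
      · have hvn : v ≠ n := by omega
        rw [hdegoth v hvn hvC]
        exact ⟨by omega, hdeg⟩
  have hnotmem : n ∉ s \ C := by
    simp [hs]
  have hcardfilter : (C.filter P).card = (s ∩ C).card := by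
    congr 1
    ext x
    simp only [Finset.mem_filter, Finset.mem_inter, hs, Finset.mem_range]
    constructor
    · rintro ⟨hx, hPx⟩
      exact ⟨⟨by exact hCl x hx, hPx⟩, hx⟩
    · rintro ⟨⟨_, hPx⟩, hx⟩
      exact ⟨hx, hPx⟩
  have h1 : degCount g' (n + 1) k = (s \ C).card + 1 := by
    rw [degCount_eq_card, hmain, Finset.card_insert_of_notMem hnotmem]
  have h2 : degCount g n k = s.card := degCount_eq_card g n k
  have h3 : (s \ C).card = s.card - (s ∩ C).card := by
    rw [← Finset.sdiff_inter_self_left, Finset.card_sdiff_of_subset Finset.inter_subset_left]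
  have h4 : (s ∩ C).card ≤ s.card := Finset.card_le_card (Finset.inter_subset_left)
  rw [h1, h2, hcardfilter]
  omega

end DC

structure KInv (k n : ℕ) (g : SimpleGraph ℕ) : Prop where
  bnd : ∀ u v, g.Adj u v → u < n ∧ v < n
  mindeg : ∀ v, v < n → k ≤ (g.neighborSet v).ncard
  nbhd : ∀ v, (g.neighborSet v).ncard = k →
    ∃ D : Finset ℕ, g.IsNClique k D ∧ ↑D = g.neighborSet v
  mem_cliques : ∀ C : Finset ℕ, g.IsNClique k C ↔ C ∈ cliquesF k g n
  card_cliques : (cliquesF k g n).card = k * n - k ^ 2 + 1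

inductive KT (k : ℕ) : ℕ → SimpleGraph ℕ → Prop
  | base : KT k (k + 1) (completeBelow (k + 1))
  | step (n : ℕ) (g : SimpleGraph ℕ) (C : Finset ℕ) :
      k + 1 ≤ n → KT k n g → g.IsNClique k C → KT k (n + 1) (extendGraph g n C)

-- complete graph facts
lemma nbr_completeBelow {m v : ℕ} (hv : v < m) :
    (completeBelow m).neighborSet v = ↑((Finset.range m).erase v) := by
  ext u
  simp only [SimpleGraph.mem_neighborSet, completeBelow_adj, Finset.coe_erase,
    Set.mem_diff, Finset.mem_coe, Finset.mem_range, Set.mem_singleton_iff]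
  constructor
  · rintro ⟨hne, _, hu⟩
    exact ⟨hu, fun e => hne e.symm⟩
  · rintro ⟨hu, hne⟩
    exact ⟨fun e => hne e.symm, hv, hu⟩

lemma nbr_completeBelow_of_ge {m v : ℕ} (hv : m ≤ v) :
    (completeBelow m).neighborSet v = ∅ := by
  ext u
  simp only [SimpleGraph.mem_neighborSet, completeBelow_adj, Set.mem_empty_iff_false, iff_false]
  rintro ⟨_, hvm, _⟩
  omega

lemma deg_completeBelow {m v : ℕ} (hv : v < m) :
    ((completeBelow m).neighborSet v).ncard = m - 1 := by
  rw [nbr_completeBelow hv, Set.ncard_coe_finset,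
    Finset.card_erase_of_mem (Finset.mem_range.mpr hv), Finset.card_range]

lemma inv_base {k : ℕ} (hk : 2 ≤ k) : KInv k (k + 1) (completeBelow (k + 1)) := by
  have hbnd : ∀ u v, (completeBelow (k + 1)).Adj u v → u < k + 1 ∧ v < k + 1 := by
    intro u v h
    rw [completeBelow_adj] at h
    exact h.2
  have hdeg : ∀ v, v < k + 1 → ((completeBelow (k + 1)).neighborSet v).ncard = k := by
    intro v hv
    rw [deg_completeBelow hv]
    omega
  have hcliqueD : ∀ v, v < k + 1 →
      (completeBelow (k + 1)).IsNClique k ((Finset.range (k + 1)).erase v) := by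
    intro v hv
    constructor
    · intro x hx y hy hxy
      simp only [Finset.coe_erase, Set.mem_diff, Finset.mem_coe, Finset.mem_range,
        Set.mem_singleton_iff] at hx hy
      exact (completeBelow_adj _ x y).mpr ⟨hxy, hx.1, hy.1⟩
    · rw [Finset.card_erase_of_mem (Finset.mem_range.mpr hv), Finset.card_range]
      omega
  have hmemcl : ∀ C : Finset ℕ, (completeBelow (k + 1)).IsNClique k C ↔
      C ∈ cliquesF k (completeBelow (k + 1)) (k + 1) := by
    intro C
    rw [mem_cliquesF]
    constructor
    · intro hC
      refine ⟨?_, hC⟩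
      intro x hx
      simp only [Finset.mem_range]
      exact (clique_mem_lt hk hbnd hC x hx)
    · exact fun h => h.2
  refine ⟨hbnd, ?_, ?_, hmemcl, ?_⟩
  · intro v hv
    rw [hdeg v hv]
  · intro v hdv
    have hv : v < k + 1 := by
      by_contra h
      rw [nbr_completeBelow_of_ge (by omega)] at hdv
      simp at hdv
      omega
    exact ⟨(Finset.range (k + 1)).erase v, hcliqueD v hv, by rw [nbr_completeBelow hv]⟩
  · have : cliquesF k (completeBelow (k + 1)) (k + 1)
        = (Finset.range (k + 1)).powersetCard k := by
      ext C
      rw [mem_cliquesF, Finset.mem_powersetCard]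
      constructor
      · rintro ⟨h1, h2⟩
        exact ⟨h1, h2.card_eq⟩
      · rintro ⟨h1, h2⟩
        refine ⟨h1, ?_, h2⟩
        intro x hx y hy hxy
        have hx' := Finset.mem_range.mp (h1 (Finset.mem_coe.mp hx))
        have hy' := Finset.mem_range.mp (h1 (Finset.mem_coe.mp hy))
        exact (completeBelow_adj _ x y).mpr ⟨hxy, hx', hy'⟩
    rw [this, Finset.card_powersetCard, Finset.card_range, Nat.choose_succ_self_right]
    have h1 : k * (k + 1) = k ^ 2 + k := by ring
    omega

lemma inv_step {k n : ℕ} (hk : 2 ≤ k) {g : SimpleGraph ℕ} {C : Finset ℕ}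
    (hn : k + 1 ≤ n) (hI : KInv k n g) (hC : g.IsNClique k C) :
    KInv k (n + 1) (extendGraph g n C) := by
  obtain ⟨hbnd, hmin, hnbhd, hmem, hcard⟩ := hI
  have hfin : ∀ v, (g.neighborSet v).Finite := nbr_finite hbnd
  have hnmem : ∀ v, n ∉ g.neighborSet v := fun v h => lt_irrefl n (hbnd v n h).2
  refine ⟨?_, ?_, ?_, ?_, ?_⟩
  · intro u v h
    rw [extendGraph_adj] at h
    rcases h.2 with h' | ⟨rfl, hv⟩ | ⟨rfl, hv⟩
    · have := hbnd u v h'; omega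
    · have := memC_lt hk hbnd hC v hv; omega
    · have := memC_lt hk hbnd hC u hv; omega
  · intro v hv
    by_cases hvn : v = n
    · subst hvn
      rw [nbr_ext_n hk hbnd hC, Set.ncard_coe_finset, hC.card_eq]
    · have hvlt : v < n := by omega
      by_cases hvC : v ∈ C
      · rw [nbr_ext_mem hk hbnd hC hvC, Set.ncard_insert_of_notMem (hnmem v) (hfin v)]
        have := hmin v hvlt
        omega
      · rw [nbr_ext_other hbnd hvn hvC]
        exact hmin v hvlt
  · intro v hdv
    by_cases hvn : v = n
    · subst hvn
      exact ⟨C, hC.mono le_ext, (nbr_ext_n hk hbnd hC).symm⟩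
    · by_cases hvC : v ∈ C
      · exfalso
        rw [nbr_ext_mem hk hbnd hC hvC, Set.ncard_insert_of_notMem (hnmem v) (hfin v)] at hdv
        have hvlt : v < n := memC_lt hk hbnd hC v hvC
        have := hmin v hvlt
        omega
      · rw [nbr_ext_other hbnd hvn hvC] at hdv
        obtain ⟨D, hD, hDeq⟩ := hnbhd v hdv
        exact ⟨D, hD.mono le_ext, by rw [nbr_ext_other hbnd hvn hvC]; exact hDeq⟩
  · intro D
    rw [mem_cliquesF]
    constructor
    · intro hD
      refine ⟨?_, hD⟩
      intro x hx
      simp only [Finset.mem_range]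
      rcases (isNClique_ext_iff hk hbnd hC D).mp hD with hold | ⟨S, hS, rfl⟩
      · have := clique_mem_lt hk hbnd hold x hx; omega
      · rcases Finset.mem_insert.mp hx with rfl | hxS
        · omega
        · have := memC_lt hk hbnd hC x ((Finset.mem_powersetCard.mp hS).1 hxS); omega
    · exact fun h => h.2
  · rw [card_cliquesF_ext hk hbnd hC, hcard]
    have h1 : k ^ 2 ≤ k * n := by
      have : k * k ≤ k * n := Nat.mul_le_mul_left k (by omega)
      nlinarith [sq_nonneg k]
    have h2 : k * (n + 1) = k * n + k := by ring
    have h3 : k ^ 2 = k * k := sq k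
    omega

lemma KT.inv {k n : ℕ} (hk : 2 ≤ k) {g : SimpleGraph ℕ} (h : KT k n g) : KInv k n g := by
  induction h with
  | base => exact inv_base hk
  | step n g C hn _ hC ih => exact inv_step hk hn ih hC

lemma KT.le {k n : ℕ} {g : SimpleGraph ℕ} (h : KT k n g) : k + 1 ≤ n := by
  induction h with
  | base => omega
  | step n g C hn _ _ _ => omega
lemma ext_determines {k n : ℕ} (hk : 2 ≤ k) {g g' : SimpleGraph ℕ} {C C' : Finset ℕ}
    (hg : KInv k n g) (hg' : KInv k n g') (hC : g.IsNClique k C) (hC' : g'.IsNClique k C')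
    (h : extendGraph g n C = extendGraph g' n C') : g = g' ∧ C = C' := by
  have hCC : C = C' := by
    apply Finset.coe_injective
    rw [← nbr_ext_n hk hg.bnd hC, ← nbr_ext_n hk hg'.bnd hC', h]
  refine ⟨?_, hCC⟩
  ext u v
  by_cases hu : u = n
  · subst hu
    simp only [not_adj_n_left hg.bnd v, not_adj_n_left hg'.bnd v]
  · by_cases hv : v = n
    · subst hv
      simp only [not_adj_n_right hg.bnd u, not_adj_n_right hg'.bnd u]
    · have h1 : (extendGraph g n C).Adj u v ↔ g.Adj u v := by
        rw [extendGraph_adj]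
        constructor
        · rintro ⟨hne, hh | ⟨h', _⟩ | ⟨h', _⟩⟩
          · exact hh
          · exact absurd h' hu
          · exact absurd h' hv
        · intro hh; exact ⟨hh.ne, Or.inl hh⟩
      have h2 : (extendGraph g' n C').Adj u v ↔ g'.Adj u v := by
        rw [extendGraph_adj]
        constructor
        · rintro ⟨hne, hh | ⟨h', _⟩ | ⟨h', _⟩⟩
          · exact hh
          · exact absurd h' hu
          · exact absurd h' hv
        · intro hh; exact ⟨hh.ne, Or.inl hh⟩
      rw [← h1, ← h2, h]

lemma KT_succ {k n : ℕ} {g : SimpleGraph ℕ} (h : KT k (n + 1) g) :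
    (n + 1 = k + 1 ∧ g = completeBelow (k + 1)) ∨
      ∃ g₀ C, k + 1 ≤ n ∧ KT k n g₀ ∧ g₀.IsNClique k C ∧ g = extendGraph g₀ n C := by
  cases h with
  | base => exact Or.inl ⟨rfl, rfl⟩
  | step n g₀ C hn h0 hC => exact Or.inr ⟨g₀, C, hn, h0, hC, rfl⟩

lemma finite_KT {k : ℕ} (hk : 2 ≤ k) : ∀ n, {g : SimpleGraph ℕ | KT k n g}.Finite := by
  intro n
  induction n with
  | zero =>
    apply Set.Finite.subset Set.finite_empty
    intro g hg
    cases hg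
  | succ n ih =>
    apply Set.Finite.subset
      (Set.Finite.insert (completeBelow (k + 1))
        (Set.Finite.biUnion ih (fun g₀ (hg₀ : KT k n g₀) =>
          Set.Finite.image (fun C => extendGraph g₀ n C)
            (Set.Finite.subset (cliquesF k g₀ n).finite_toSet (by
              intro C hC
              exact Finset.mem_coe.mpr (((KT.inv hk hg₀).mem_cliques C).mp hC))))))
    intro g hg
    rcases KT_succ hg with ⟨_, rfl⟩ | ⟨g₀, C, hn, h0, hC, rfl⟩
    · exact Set.mem_insert _ _
    · refine Set.mem_insert_of_mem _ ?_
      refine Set.mem_biUnion h0 ?_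
      exact Set.mem_image_of_mem _ hC

lemma KT_kp1 {k : ℕ} {g : SimpleGraph ℕ} (h : KT k (k + 1) g) : g = completeBelow (k + 1) := by
  rcases KT_succ h with ⟨_, rfl⟩ | ⟨g₀, C, hn, h0, hC, rfl⟩
  · rfl
  · exfalso; omega

lemma ncard_cliques {k n : ℕ} {g : SimpleGraph ℕ} (hI : KInv k n g) :
    ({D : Finset ℕ | g.IsNClique k D}.ncard : ENNReal) = ((k * n - k ^ 2 + 1 : ℕ) : ENNReal) := by
  have h1 : {D : Finset ℕ | g.IsNClique k D} = ↑(cliquesF k g n) := by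
    ext D
    simp only [Set.mem_setOf_eq, Finset.mem_coe]
    exact hI.mem_cliques D
  rw [h1, Set.ncard_coe_finset, hI.card_cliques]

section Measure

variable {k : ℕ} {Ω : Type} [MeasurableSpace Ω] {μ : Measure Ω} [IsProbabilityMeasure μ]
  {G : ℕ → Ω → SimpleGraph ℕ}

/-- generic: integral of a function constant on a measure-1 finite family of
disjoint measurable sets -/
lemma integral_eq_sum_of_partition {ι : Type*} (s : Finset ι) (B : ι → Set Ω)
    (hmeas : ∀ i ∈ s, MeasurableSet (B i))
    (hdisj : (↑s : Set ι).PairwiseDisjoint B)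
    (hsum : ∑ i ∈ s, μ (B i) = 1) (f : Ω → ℝ) (c : ι → ℝ)
    (hf : ∀ i ∈ s, ∀ ω ∈ B i, f ω = c i) :
    ∫ ω, f ω ∂μ = ∑ i ∈ s, (μ (B i)).toReal * c i := by
  classical
  set U : Set Ω := ⋃ i ∈ s, B i with hU
  have hUmeas : MeasurableSet U := by
    exact MeasurableSet.biUnion s.countable_toSet (fun i hi => hmeas i hi)
  have hμU : μ U = 1 := by
    rw [hU, measure_biUnion_finset hdisj hmeas, hsum]
  have hcompl : μ Uᶜ = 0 := by
    rw [measure_compl hUmeas (measure_ne_top μ U), hμU, measure_univ, tsub_self]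
  have hae : f =ᵐ[μ] fun ω => ∑ i ∈ s, Set.indicator (B i) (fun _ => c i) ω := by
    apply Filter.eventuallyEq_of_mem (MeasureTheory.mem_ae_iff.mpr hcompl)
    intro ω hω
    simp only [hU, Set.mem_iUnion, exists_prop] at hω
    obtain ⟨i, hi, hωi⟩ := hω
    show f ω = ∑ j ∈ s, Set.indicator (B j) (fun _ => c j) ω
    rw [Finset.sum_eq_single i]
    · rw [Set.indicator_of_mem hωi]
      exact hf i hi ω hωi
    · intro j hj hji
      apply Set.indicator_of_notMem
      intro hωj
      exact (Set.disjoint_left.mp (hdisj (Finset.mem_coe.mpr hj) (Finset.mem_coe.mpr hi) hji)) hωj hωi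
    · intro hi'
      exact absurd hi hi'
  rw [integral_congr_ae hae,
    integral_finset_sum _ (fun i hi => (integrable_const (c i)).indicator (hmeas i hi))]
  refine Finset.sum_congr rfl ?_
  intro i hi
  rw [MeasureTheory.integral_indicator_const (c i) (hmeas i hi), smul_eq_mul]
  rfl

end Measure

section Main
set_option linter.unusedSectionVars false

variable {k : ℕ} {Ω : Type} [MeasurableSpace Ω] {μ : Measure Ω} [IsProbabilityMeasure μ]
  {G : ℕ → Ω → SimpleGraph ℕ}

def evA {Ω : Type} (G : ℕ → Ω → SimpleGraph ℕ) (n : ℕ)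
    (p : Σ _ : SimpleGraph ℕ, Finset ℕ) : Set Ω :=
  {ω | G n ω = p.1 ∧ G (n + 1) ω = extendGraph p.1 n p.2}

noncomputable def pairsF {k : ℕ} (hk : 2 ≤ k) (n : ℕ) :
    Finset (Σ _ : SimpleGraph ℕ, Finset ℕ) :=
  (finite_KT hk n).toFinset.sigma (fun g => cliquesF k g n)

lemma mem_pairsF {hk : 2 ≤ k} {n : ℕ} {p : Σ _ : SimpleGraph ℕ, Finset ℕ} :
    p ∈ pairsF hk n ↔ KT k n p.1 ∧ p.2 ∈ cliquesF k p.1 n := by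
  cases p with
  | mk g C =>
    rw [pairsF, Finset.mem_sigma, Set.Finite.mem_toFinset]
    rfl

lemma evA_measurable (hG : IsRandomKTreeProcess k μ G) (n : ℕ)
    (p : Σ _ : SimpleGraph ℕ, Finset ℕ) : MeasurableSet (evA G n p) := by
  have h : evA G n p
      = {ω | G n ω = p.1} ∩ {ω | G (n + 1) ω = extendGraph p.1 n p.2} := rfl
  rw [h]
  exact (hG.meas n _).inter (hG.meas (n + 1) _)

lemma evA_disjoint (hk : 2 ≤ k) (n : ℕ) :
    (↑(pairsF hk n) : Set (Σ _ : SimpleGraph ℕ, Finset ℕ)).PairwiseDisjoint (evA G n) := by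
  rintro ⟨g1, C1⟩ hp ⟨g2, C2⟩ hq hne
  have hp' := mem_pairsF.mp (Finset.mem_coe.mp hp)
  have hq' := mem_pairsF.mp (Finset.mem_coe.mp hq)
  apply Set.disjoint_left.mpr
  rintro ω ⟨e1, e2⟩ ⟨e1', e2'⟩
  have hgg : g1 = g2 := e1.symm.trans e1'
  subst hgg
  have hee : extendGraph g1 n C1 = extendGraph g1 n C2 := e2.symm.trans e2'
  have hCC := (ext_determines hk (KT.inv hk hp'.1) (KT.inv hk hq'.1)
    (mem_cliquesF.mp hp'.2).2 (mem_cliquesF.mp hq'.2).2 hee).2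
  subst hCC
  exact hne rfl

lemma ev_disjoint (n : ℕ) (T : Finset (SimpleGraph ℕ)) :
    (↑T : Set (SimpleGraph ℕ)).PairwiseDisjoint (fun g => {ω | G n ω = g}) := by
  intro g1 _ g2 _ hne
  apply Set.disjoint_left.mpr
  rintro ω e1 e2
  exact hne ((e1 : G n ω = g1).symm.trans e2)

lemma step' (hk : 2 ≤ k) (hG : IsRandomKTreeProcess k μ G) {n : ℕ} (hn : k + 1 ≤ n)
    {g : SimpleGraph ℕ} (hg : KT k n g) {C : Finset ℕ} (hC : g.IsNClique k C) :
    μ {ω | G n ω = g ∧ G (n + 1) ω = extendGraph g n C}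
      = μ {ω | G n ω = g} / ((k * n - k ^ 2 + 1 : ℕ) : ENNReal) := by
  rw [hG.step n hn g C hC, ncard_cliques (KT.inv hk hg)]

lemma sumInnerCl (hk : 2 ≤ k) (hG : IsRandomKTreeProcess k μ G) {n : ℕ} (hn : k + 1 ≤ n)
    {g : SimpleGraph ℕ} (hg : KT k n g) :
    ∑ C ∈ cliquesF k g n, μ (evA G n ⟨g, C⟩) = μ {ω | G n ω = g} := by
  have hN1 : 1 ≤ k * n - k ^ 2 + 1 := by omega
  have hN0 : ((k * n - k ^ 2 + 1 : ℕ) : ENNReal) ≠ 0 :=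
    Nat.cast_ne_zero.mpr (by omega)
  have hNt : ((k * n - k ^ 2 + 1 : ℕ) : ENNReal) ≠ ⊤ := ENNReal.natCast_ne_top _
  have heq : ∀ C ∈ cliquesF k g n,
      μ (evA G n ⟨g, C⟩) = μ {ω | G n ω = g} / ((k * n - k ^ 2 + 1 : ℕ) : ENNReal) := by
    intro C hCm
    exact step' hk hG hn hg (mem_cliquesF.mp hCm).2
  rw [Finset.sum_congr rfl heq, Finset.sum_const, (KT.inv hk hg).card_cliques,
    nsmul_eq_mul, div_eq_mul_inv, ← mul_assoc,
    mul_comm (((k * n - k ^ 2 + 1 : ℕ) : ENNReal)) (μ {ω | G n ω = g}), mul_assoc,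
    ENNReal.mul_inv_cancel hN0 hNt, mul_one]

lemma probSum (hk : 2 ≤ k) (hG : IsRandomKTreeProcess k μ G) :
    ∀ n, k + 1 ≤ n → ∑ g ∈ (finite_KT hk n).toFinset, μ {ω | G n ω = g} = 1 := by
  classical
  intro n hn
  induction n, hn using Nat.le_induction with
  | base =>
    have hT : (finite_KT hk (k + 1)).toFinset = {completeBelow (k + 1)} := by
      ext g
      rw [Set.Finite.mem_toFinset, Finset.mem_singleton]
      constructor
      · exact KT_kp1
      · rintro rfl; exact KT.base
    rw [hT, Finset.sum_singleton, hG.init]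
  | succ n hn ih =>
    have hpair : ∑ p ∈ pairsF hk n, μ (evA G n p) = 1 := by
      rw [pairsF, Finset.sum_sigma]
      rw [Finset.sum_congr rfl (fun g hg =>
        sumInnerCl hk hG hn (Set.Finite.mem_toFinset _ |>.mp hg))]
      exact ih
    have himg : ∀ p ∈ pairsF hk n, KT k (n + 1) (extendGraph p.1 n p.2) := by
      rintro ⟨g, C⟩ hp
      have hp' := mem_pairsF.mp hp
      exact KT.step n g C hn hp'.1 (mem_cliquesF.mp hp'.2).2
    have hinj : ∀ p ∈ pairsF hk n, ∀ q ∈ pairsF hk n,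
        extendGraph p.1 n p.2 = extendGraph q.1 n q.2 → p = q := by
      rintro ⟨g1, C1⟩ hp ⟨g2, C2⟩ hq hee
      have hp' := mem_pairsF.mp hp
      have hq' := mem_pairsF.mp hq
      obtain ⟨h1, h2⟩ := ext_determines hk (KT.inv hk hp'.1) (KT.inv hk hq'.1)
        (mem_cliquesF.mp hp'.2).2 (mem_cliquesF.mp hq'.2).2 hee
      subst h1; subst h2; rfl
    have hle1 : (1 : ENNReal) ≤ ∑ g ∈ (finite_KT hk (n + 1)).toFinset,
        μ {ω | G (n + 1) ω = g} := by
      calc (1 : ENNReal) = ∑ p ∈ pairsF hk n, μ (evA G n p) := hpair.symm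
        _ ≤ ∑ p ∈ pairsF hk n, μ {ω | G (n + 1) ω = extendGraph p.1 n p.2} := by
            apply Finset.sum_le_sum
            intro p _
            apply measure_mono
            intro ω hω
            exact hω.2
        _ = ∑ g' ∈ (pairsF hk n).image (fun p => extendGraph p.1 n p.2),
              μ {ω | G (n + 1) ω = g'} := by rw [Finset.sum_image hinj]
        _ ≤ ∑ g ∈ (finite_KT hk (n + 1)).toFinset, μ {ω | G (n + 1) ω = g} := by
            apply Finset.sum_le_sum_of_subset
            intro g' hg'
            obtain ⟨p, hp, rfl⟩ := Finset.mem_image.mp hg'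
            exact (Set.Finite.mem_toFinset _).mpr (himg p hp)
    have hle2 : ∑ g ∈ (finite_KT hk (n + 1)).toFinset, μ {ω | G (n + 1) ω = g}
        ≤ 1 := by
      rw [← measure_biUnion_finset (ev_disjoint (n + 1) _) (fun g _ => hG.meas (n + 1) g)]
      exact prob_le_one
    exact le_antisymm hle2 hle1

lemma pairSum (hk : 2 ≤ k) (hG : IsRandomKTreeProcess k μ G) {n : ℕ} (hn : k + 1 ≤ n) :
    ∑ p ∈ pairsF hk n, μ (evA G n p) = 1 := by
  rw [pairsF, Finset.sum_sigma]
  rw [Finset.sum_congr rfl (fun g hg =>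
    sumInnerCl hk hG hn (Set.Finite.mem_toFinset _ |>.mp hg))]
  exact probSum hk hG n hn

lemma integral_state (hk : 2 ≤ k) (hG : IsRandomKTreeProcess k μ G) {n : ℕ}
    (hn : k + 1 ≤ n) (φ : SimpleGraph ℕ → ℝ) :
    ∫ ω, φ (G n ω) ∂μ
      = ∑ g ∈ (finite_KT hk n).toFinset, (μ {ω | G n ω = g}).toReal * φ g := by
  apply integral_eq_sum_of_partition _ (fun g => {ω | G n ω = g})
    (fun g _ => hG.meas n g) (ev_disjoint n _) (probSum hk hG n hn)
  intro g _ ω hω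
  rw [show G n ω = g from hω]

lemma integralPair (hk : 2 ≤ k) (hG : IsRandomKTreeProcess k μ G) {n : ℕ}
    (hn : k + 1 ≤ n) (φ : SimpleGraph ℕ → ℝ) :
    ∫ ω, φ (G (n + 1) ω) ∂μ
      = ∑ p ∈ pairsF hk n, (μ (evA G n p)).toReal * φ (extendGraph p.1 n p.2) := by
  apply integral_eq_sum_of_partition _ (evA G n)
    (fun p _ => evA_measurable hG n p) (evA_disjoint hk n) (pairSum hk hG hn)
  intro p _ ω hω
  rw [show G (n + 1) ω = extendGraph p.1 n p.2 from hω.2]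

end Main

lemma degCount_completeBelow (k : ℕ) (hk : 2 ≤ k) :
    degCount (completeBelow (k + 1)) (k + 1) k = k + 1 := by
  rw [degCount_eq_card]
  rw [Finset.filter_true_of_mem, Finset.card_range]
  intro v hv
  rw [deg_completeBelow (Finset.mem_range.mp hv)]
  omega

lemma degCount_ext_two {k : ℕ} (hk : 2 ≤ k) {C : Finset ℕ}
    (hC : (completeBelow (k + 1)).IsNClique k C) :
    degCount (extendGraph (completeBelow (k + 1)) (k + 1) C) (k + 1 + 1) k = 2 := by
  have hI := inv_base hk
  have h := degCount_ext_add hk hI.bnd hC hI.mindeg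
  have hc : (C.filter (fun v => ((completeBelow (k + 1)).neighborSet v).ncard = k)).card
      = k := by
    rw [Finset.filter_true_of_mem, hC.card_eq]
    intro v hv
    have hvlt := memC_lt hk hI.bnd hC v hv
    rw [deg_completeBelow hvlt]
    omega
  rw [hc, degCount_completeBelow k hk] at h
  omega

/-- For every integer `k ≥ 2`, in the random `k`-tree process the expected number
`Y_k(n) = E[X_k(n)]` of vertices of degree exactly `k` satisfies the recurrence
`Y_k(n+1) = 1 + (1 − k/(k·n − k² + 1))·Y_k(n)` for all `n ≥ k+2`, together with the
initial value `Y_k(k+2) = 2`. -/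
theorem expected_degree_k_count_recurrence (k : ℕ) (hk : 2 ≤ k)
    {Ω : Type} [MeasurableSpace Ω] (μ : Measure Ω) [IsProbabilityMeasure μ]
    (G : ℕ → Ω → SimpleGraph ℕ) (hG : IsRandomKTreeProcess k μ G) :
    (∀ n : ℕ, k + 2 ≤ n →
      ∫ ω, (degCount (G (n + 1) ω) (n + 1) k : ℝ) ∂μ
        = 1 + (1 - (k : ℝ) / ((k : ℝ) * n - (k : ℝ) ^ 2 + 1)) *
            ∫ ω, (degCount (G n ω) n k : ℝ) ∂μ) ∧
    ∫ ω, (degCount (G (k + 2) ω) (k + 2) k : ℝ) ∂μ = 2 := by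
  constructor
  · intro n hn
    have hn' : k + 1 ≤ n := by omega
    have hkk : k ^ 2 ≤ k * n := by
      have h1 : k * k ≤ k * n := Nat.mul_le_mul_left k (by omega)
      have h2 : k ^ 2 = k * k := sq k
      omega
    set N : ℕ := k * n - k ^ 2 + 1 with hN
    have hNR : ((N : ℕ) : ℝ) = (k : ℝ) * n - (k : ℝ) ^ 2 + 1 := by
      rw [hN]
      push_cast [hkk]
      ring
    have hNpos : (0 : ℝ) < (N : ℝ) := by
      have : 1 ≤ N := by omega
      exact_mod_cast Nat.lt_of_lt_of_le Nat.zero_lt_one this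
    have h1 := integralPair hk hG hn' (fun g => (degCount g (n + 1) k : ℝ))
    have h2 := integral_state hk hG hn' (fun g => (degCount g n k : ℝ))
    rw [h1, h2, pairsF, Finset.sum_sigma]
    have hmain : ∀ g ∈ (finite_KT hk n).toFinset,
        ∑ C ∈ cliquesF k g n,
          (μ (evA G n ⟨g, C⟩)).toReal * (degCount (extendGraph g n C) (n + 1) k : ℝ)
        = (μ {ω | G n ω = g}).toReal *
            (1 + (1 - (k : ℝ) / (N : ℝ)) * (degCount g n k : ℝ)) := by
      intro g hg
      have hKT := (Set.Finite.mem_toFinset _).mp hg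
      have hI := KT.inv hk hKT
      have hstep : ∀ C ∈ cliquesF k g n, (μ (evA G n ⟨g, C⟩)).toReal
          = (μ {ω | G n ω = g}).toReal / (N : ℝ) := by
        intro C hCm
        rw [show evA G n ⟨g, C⟩
            = {ω | G n ω = g ∧ G (n + 1) ω = extendGraph g n C} from rfl,
          step' hk hG hn' hKT (mem_cliquesF.mp hCm).2, ENNReal.toReal_div,
          ENNReal.toReal_natCast]
      have hdd : ∀ C ∈ cliquesF k g n, (degCount (extendGraph g n C) (n + 1) k : ℝ)
          = (degCount g n k : ℝ) + 1
            - ((C.filter (fun v => (g.neighborSet v).ncard = k)).card : ℝ) := by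
        intro C hCm
        have h := degCount_ext_add hk hI.bnd (mem_cliquesF.mp hCm).2 hI.mindeg
        have h' := congrArg (Nat.cast : ℕ → ℝ) h
        push_cast at h'
        linarith
      have hsumc : ∑ C ∈ cliquesF k g n,
          ((C.filter (fun v => (g.neighborSet v).ncard = k)).card : ℝ)
          = (k : ℝ) * (degCount g n k : ℝ) := by
        have hcc : ∀ v, (g.neighborSet v).ncard = k →
            ((cliquesF k g n).filter (fun C => v ∈ C)).card = k := by
          intro v hv
          obtain ⟨D, hD, hDeq⟩ := hI.nbhd v hv
          exact card_cliques_with hk hI.bnd hD hDeq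
        have h := sum_filter_card (k := k) (n := n) (g := g) hcc
        exact_mod_cast congrArg (Nat.cast : ℕ → ℝ) h
      calc ∑ C ∈ cliquesF k g n,
            (μ (evA G n ⟨g, C⟩)).toReal * (degCount (extendGraph g n C) (n + 1) k : ℝ)
          = ∑ C ∈ cliquesF k g n, (μ {ω | G n ω = g}).toReal / (N : ℝ) *
              ((degCount g n k : ℝ) + 1
                - ((C.filter (fun v => (g.neighborSet v).ncard = k)).card : ℝ)) := by
            refine Finset.sum_congr rfl ?_
            intro C hCm
            rw [hstep C hCm, hdd C hCm]
        _ = (μ {ω | G n ω = g}).toReal / (N : ℝ) *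
              (∑ C ∈ cliquesF k g n, ((degCount g n k : ℝ) + 1
                - ((C.filter (fun v => (g.neighborSet v).ncard = k)).card : ℝ))) := by
            rw [Finset.mul_sum]
        _ = (μ {ω | G n ω = g}).toReal / (N : ℝ) *
              ((N : ℝ) * ((degCount g n k : ℝ) + 1)
                - (k : ℝ) * (degCount g n k : ℝ)) := by
            rw [Finset.sum_sub_distrib, Finset.sum_const, hI.card_cliques, hsumc,
              nsmul_eq_mul]
        _ = (μ {ω | G n ω = g}).toReal *
              (1 + (1 - (k : ℝ) / (N : ℝ)) * (degCount g n k : ℝ)) := by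
            have hNne : (N : ℝ) ≠ 0 := hNpos.ne'
            field_simp
            try ring
            try exact Or.inl trivial
    rw [Finset.sum_congr rfl hmain]
    have hexp : ∑ g ∈ (finite_KT hk n).toFinset, (μ {ω | G n ω = g}).toReal *
          (1 + (1 - (k : ℝ) / (N : ℝ)) * (degCount g n k : ℝ))
        = (∑ g ∈ (finite_KT hk n).toFinset, (μ {ω | G n ω = g}).toReal)
          + (1 - (k : ℝ) / (N : ℝ)) * ∑ g ∈ (finite_KT hk n).toFinset,
              (μ {ω | G n ω = g}).toReal * (degCount g n k : ℝ) := by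
      rw [Finset.mul_sum, ← Finset.sum_add_distrib]
      refine Finset.sum_congr rfl ?_
      intro g _
      ring
    rw [hexp]
    have hone : ∑ g ∈ (finite_KT hk n).toFinset, (μ {ω | G n ω = g}).toReal = 1 := by
      rw [← ENNReal.toReal_sum (fun g _ => measure_ne_top μ _), probSum hk hG n hn',
        ENNReal.toReal_one]
    rw [hone, hNR]
  · have h1 := integralPair hk hG (le_refl (k + 1)) (fun g => (degCount g (k + 2) k : ℝ))
    show ∫ ω, (degCount (G (k + 1 + 1) ω) (k + 2) k : ℝ) ∂μ = 2
    rw [h1]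
    have hval : ∀ p ∈ pairsF hk (k + 1),
        (degCount (extendGraph p.1 (k + 1) p.2) (k + 2) k : ℝ) = 2 := by
      rintro ⟨g, C⟩ hp
      have hp' := mem_pairsF.mp hp
      have hgc := KT_kp1 hp'.1
      subst hgc
      have := degCount_ext_two hk (mem_cliquesF.mp hp'.2).2
      show ((degCount (extendGraph (completeBelow (k + 1)) (k + 1) C) (k + 1 + 1) k : ℕ) : ℝ) = 2
      rw [this]
      norm_num
    rw [Finset.sum_congr rfl (fun p hp => by rw [hval p hp])]
    rw [← Finset.sum_mul]
    rw [← ENNReal.toReal_sum (fun p _ => measure_ne_top μ _),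
      pairSum hk hG (le_refl (k + 1)), ENNReal.toReal_one]
    norm_num
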